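/- Let n, n' ≥ 2, c ∈ ℂ^n, c' ∈ ℂ^{n'}, and let W_c = Im F(c) ⊆ V^{⊗n} and W_{c'} = Im F(c') ⊆ V^{⊗n'}. Then for every u ∈ ℂ the fused operator R_{c,c'}(u) maps the subspace W_c ⊗ W_{c'} of V^{⊗n} ⊗ V^{⊗n'} into itself. -/

import Mathlib

/-!
We model the finite-dimensional complex vector space `V` as `ℂ^N` (i.e. `Fin N → ℂ`),
so that `V^{⊗ n}` is `(Fin n → Fin N) → ℂ` and endomorphisms of `V^{⊗ n}` are matrices
indexed by multi-indices `Fin n → Fin N`.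
-/

open scoped BigOperators

noncomputable section

/-- Endomorphisms of `V ⊗ V` for `V = ℂ^N`. -/
abbrev End2 (N : ℕ) := Matrix (Fin N × Fin N) (Fin N × Fin N) ℂ

/-- Endomorphisms of `V^{⊗ n}` for `V = ℂ^N`. -/
abbrev EndT (N n : ℕ) := Matrix (Fin n → Fin N) (Fin n → Fin N) ℂ

/-- `X_{a,b}` : the endomorphism `X` of `V ⊗ V` applied to the tensor factors `a` and `b`
(in that order) of `V^{⊗ n}`, and the identity on all other factors. -/
def op2 (N n : ℕ) (X : End2 N) (a b : Fin n) : EndT N n :=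
  fun f g => X (f a, f b) (g a, g b) *
    ∏ i : Fin n, if i ≠ a ∧ i ≠ b then (if f i = g i then (1 : ℂ) else 0) else 1

/-- The flip (permutation) operator `P : x ⊗ y ↦ y ⊗ x` on `V ⊗ V`. -/
def flipMat (N : ℕ) : End2 N := fun p q => if p.1 = q.2 ∧ p.2 = q.1 then 1 else 0

/-- `R` is a solution of the Yang--Baxter equation (with additive spectral parameters)
on `V ⊗ V ⊗ V`:  `R₁₂(u) R₁₃(u+v) R₂₃(v) = R₂₃(v) R₁₃(u+v) R₁₂(u)`. -/
def YangBaxter (N : ℕ) (R : ℂ → End2 N) : Prop :=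
  ∀ u v : ℂ,
    op2 N 3 (R u) 0 1 * op2 N 3 (R (u + v)) 0 2 * op2 N 3 (R v) 1 2 =
    op2 N 3 (R v) 1 2 * op2 N 3 (R (u + v)) 0 2 * op2 N 3 (R u) 0 1

/-- The fused operator `R_{c,c'}(u)`, acting on `V^{⊗ m}`, where the `n` factors of the first
block are embedded via `a` and the `n'` factors of the second block via `b`:
`R_{c,c'}(u) = ∏→_{i=1..n'} [ R_{n,i'}(u+c_n−c'_i) ⋯ R_{2,i'}(u+c_2−c'_i) R_{1,i'}(u+c_1−c'_i) ]`. -/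
def fusedOp (N : ℕ) (R : ℂ → End2 N) {m n n' : ℕ} (a : Fin n → Fin m) (b : Fin n' → Fin m)
    (c : Fin n → ℂ) (c' : Fin n' → ℂ) (u : ℂ) : EndT N m :=
  ((List.finRange n').map fun i =>
    (((List.finRange n).reverse).map fun k =>
      op2 N m (R (u + c k - c' i)) (a k) (b i)).prod).prod

/-- The list of pairs `(i,j)` with `i < j`, in lexicographic order. -/
def lexPairs (n : ℕ) : List (Fin n × Fin n) :=
  (List.finRange n).flatMap fun i =>
    ((List.finRange n).filter fun j => decide (i < j)).map fun j => (i, j)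

/-- The operator `F(c) = ∏→_{1 ≤ i < j ≤ n} R_{i,j}(c_i − c_j)` on `V^{⊗ n}`
(product over the pairs `i < j` in lexicographic order). -/
def Fop (N : ℕ) (R : ℂ → End2 N) {n : ℕ} (c : Fin n → ℂ) : EndT N n :=
  ((lexPairs n).map fun p => op2 N n (R (c p.1 - c p.2)) p.1 p.2).prod

/-- The endomorphism of `V^{⊗ n}` embedded into `V^{⊗ m}`, acting on the factors listed
by `e` and identically on all other factors. -/
def opBlock (N : ℕ) {m n : ℕ} (e : Fin n → Fin m) (X : EndT N n) : EndT N m :=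
  fun f g => X (f ∘ e) (g ∘ e) *
    ∏ i : Fin m, if ∀ k, e k ≠ i then (if f i = g i then (1 : ℂ) else 0) else 1

/-- The operator `P_π` on `V^{⊗ n}` permuting the tensor factors:
`P_π (x_1 ⊗ ⋯ ⊗ x_n) = x_{π(1)} ⊗ ⋯ ⊗ x_{π(n)}`. -/
def permMat (N n : ℕ) (π : Equiv.Perm (Fin n)) : EndT N n :=
  fun f g => if f = g ∘ π then 1 else 0

/-- The tensor product of a vector of `V^{⊗ n}` and a vector of `V^{⊗ n'}`,
as a vector of `V^{⊗ (n+n')}`. -/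
def tensVec (N : ℕ) {n n' : ℕ} (x : (Fin n → Fin N) → ℂ) (y : (Fin n' → Fin N) → ℂ) :
    (Fin (n + n') → Fin N) → ℂ :=
  fun f => x (fun i => f (Fin.castAdd n' i)) * y (fun j => f (Fin.natAdd n j))

end


/-! ### Auxiliary machinery -/

section Aux
open scoped BigOperators

lemma op2_mul_op2_apply {N m : ℕ} (X Y : End2 N) (a b c d : Fin m)
    (hac : a ≠ c) (had : a ≠ d) (hbc : b ≠ c) (hbd : b ≠ d) (f g : Fin m → Fin N) :
    (op2 N m X a b * op2 N m Y c d) f g =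
      X (f a, f b) (g a, g b) * Y (f c, f d) (g c, g d) *
        ∏ i : Fin m, if i ≠ a ∧ i ≠ b ∧ i ≠ c ∧ i ≠ d then (if f i = g i then (1:ℂ) else 0) else 1 := by
  rw [Matrix.mul_apply]
  set h₀ : Fin m → Fin N := fun i => if i = a ∨ i = b then g i else f i with hh₀
  rw [Finset.sum_eq_single h₀]
  · have ha : h₀ a = g a := by simp [hh₀]
    have hb : h₀ b = g b := by simp [hh₀]
    have hc : h₀ c = f c := by simp [hh₀, hac.symm, hbc.symm]
    have hd : h₀ d = f d := by simp [hh₀, had.symm, hbd.symm]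
    unfold op2
    rw [ha, hb, hc, hd]
    have e1 : (∏ i : Fin m, if i ≠ a ∧ i ≠ b then (if f i = h₀ i then (1:ℂ) else 0) else 1) = 1 := by
      apply Finset.prod_eq_one
      intro i _
      by_cases hi : i ≠ a ∧ i ≠ b
      · have : h₀ i = f i := by simp [hh₀, hi.1, hi.2]
        simp [hi, this]
      · simp [hi]
    have e2 : (∏ i : Fin m, if i ≠ c ∧ i ≠ d then (if h₀ i = g i then (1:ℂ) else 0) else 1)
        = ∏ i : Fin m, if i ≠ a ∧ i ≠ b ∧ i ≠ c ∧ i ≠ d then (if f i = g i then (1:ℂ) else 0) else 1 := by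
      apply Finset.prod_congr rfl
      intro i _
      by_cases hia : i = a
      · subst hia
        simp [hh₀, hac, had]
      by_cases hib : i = b
      · subst hib
        simp [hh₀, hbc, hbd]
      · have : h₀ i = f i := by simp [hh₀, hia, hib]
        rw [this]
        by_cases hic : i ≠ c ∧ i ≠ d <;> simp [hic, hia, hib]
    rw [e1, e2]; ring
  · intro h _ hne
    obtain ⟨i, hi⟩ := Function.ne_iff.mp hne
    by_cases hia : i = a
    · subst hia
      have hne2 : h i ≠ g i := by simpa [hh₀] using hi
      have z : op2 N m Y c d h g = 0 := by
        unfold op2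
        rw [Finset.prod_eq_zero (Finset.mem_univ i)]
        · ring
        · simp [hac, had, hne2]
      rw [z, mul_zero]
    by_cases hib : i = b
    · subst hib
      have hne2 : h i ≠ g i := by simpa [hh₀, hia] using hi
      have z : op2 N m Y c d h g = 0 := by
        unfold op2
        rw [Finset.prod_eq_zero (Finset.mem_univ i)]
        · ring
        · simp [hbc, hbd, hne2]
      rw [z, mul_zero]
    · have : h i ≠ f i := by
        have : h₀ i = f i := by simp [hh₀, hia, hib]
        rw [this] at hi; exact hi
      have z : op2 N m X a b f h = 0 := by
        unfold op2
        rw [Finset.prod_eq_zero (Finset.mem_univ i)]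
        · ring
        · simp [hia, hib, Ne.symm this]
      rw [z, zero_mul]
  · intro habs; exact absurd (Finset.mem_univ h₀) habs

lemma op2_comm_disjoint {N m : ℕ} (X Y : End2 N) (a b c d : Fin m)
    (hac : a ≠ c) (had : a ≠ d) (hbc : b ≠ c) (hbd : b ≠ d) :
    Commute (op2 N m X a b) (op2 N m Y c d) := by
  unfold Commute SemiconjBy
  ext f g
  rw [op2_mul_op2_apply X Y a b c d hac had hbc hbd,
      op2_mul_op2_apply Y X c d a b hac.symm hbc.symm had.symm hbd.symm]
  have : (∏ i : Fin m, if i ≠ c ∧ i ≠ d ∧ i ≠ a ∧ i ≠ b then (if f i = g i then (1:ℂ) else 0) else 1)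
      = ∏ i : Fin m, if i ≠ a ∧ i ≠ b ∧ i ≠ c ∧ i ≠ d then (if f i = g i then (1:ℂ) else 0) else 1 := by
    apply Finset.prod_congr rfl
    intro i _
    congr 1
    simp [and_comm, and_left_comm]
    tauto
  rw [this]; ring

lemma opBlock_mul {N m n : ℕ} (e : Fin n → Fin m) (he : Function.Injective e) (X Y : EndT N n) :
    opBlock N e (X * Y) = opBlock N e X * opBlock N e Y := by
  classical
  ext f g
  rw [Matrix.mul_apply]
  set patch : (Fin n → Fin N) → (Fin m → Fin N) := fun p i =>
    if h : ∃ k, e k = i then p h.choose else f i with hpatch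
  have patch_e : ∀ p k, patch p (e k) = p k := by
    intro p k
    have h : ∃ k', e k' = e k := ⟨k, rfl⟩
    simp only [hpatch, dif_pos h]
    congr 1
    exact he h.choose_spec
  have patch_not : ∀ (p : Fin n → Fin N) i, (∀ k, e k ≠ i) → patch p i = f i := by
    intro p i hi
    have : ¬ ∃ k, e k = i := by push_neg; exact hi
    simp [hpatch, this]
  have patch_inj : Function.Injective patch := by
    intro p q h
    funext k
    have := congrFun h (e k)
    rwa [patch_e, patch_e] at this
  have vanish : ∀ h ∈ Finset.univ, h ∉ Finset.univ.image patch →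
      opBlock N e X f h * opBlock N e Y h g = 0 := by
    intro h _ hh
    have : ¬ ∀ i, (∀ k, e k ≠ i) → h i = f i := by
      intro hall
      apply hh
      refine Finset.mem_image.mpr ⟨h ∘ e, Finset.mem_univ _, ?_⟩
      funext i
      by_cases hex : ∃ k, e k = i
      · obtain ⟨k, rfl⟩ := hex
        rw [patch_e]; rfl
      · push_neg at hex
        rw [patch_not _ _ hex, hall i hex]
    push_neg at this
    obtain ⟨i, hi1, hi2⟩ := this
    have z : opBlock N e X f h = 0 := by
      unfold opBlock
      rw [Finset.prod_eq_zero (Finset.mem_univ i)]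
      · ring
      · simp [hi1, Ne.symm hi2]
    rw [z, zero_mul]
  rw [← Finset.sum_subset (Finset.subset_univ (Finset.univ.image patch)) vanish,
      Finset.sum_image (fun p _ q _ h => patch_inj h)]
  have comp_e : ∀ p, (patch p) ∘ e = p := by
    intro p; funext k; exact patch_e p k
  have term : ∀ p : Fin n → Fin N,
      opBlock N e X f (patch p) * opBlock N e Y (patch p) g =
      X (f ∘ e) p * Y p (g ∘ e) *
        ∏ i : Fin m, if ∀ k, e k ≠ i then (if f i = g i then (1 : ℂ) else 0) else 1 := by
    intro p
    unfold opBlock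
    rw [comp_e]
    have e1 : (∏ i : Fin m, if ∀ k, e k ≠ i then (if f i = patch p i then (1:ℂ) else 0) else 1) = 1 := by
      apply Finset.prod_eq_one
      intro i _
      by_cases hi : ∀ k, e k ≠ i
      · rw [if_pos hi, patch_not p i hi, if_pos rfl]
      · rw [if_neg hi]
    have e2 : (∏ i : Fin m, if ∀ k, e k ≠ i then (if patch p i = g i then (1:ℂ) else 0) else 1)
        = ∏ i : Fin m, if ∀ k, e k ≠ i then (if f i = g i then (1:ℂ) else 0) else 1 := by
      apply Finset.prod_congr rfl
      intro i _
      by_cases hi : ∀ k, e k ≠ i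
      · rw [if_pos hi, if_pos hi, patch_not p i hi]
      · rw [if_neg hi, if_neg hi]
    rw [e1, e2]; ring
  rw [Finset.sum_congr rfl (fun p _ => term p)]
  unfold opBlock
  rw [Matrix.mul_apply, Finset.sum_mul]

lemma opBlock_one {N m n : ℕ} (e : Fin n → Fin m) :
    opBlock N e (1 : EndT N n) = 1 := by
  classical
  ext f g
  unfold opBlock
  rw [Matrix.one_apply, Matrix.one_apply]
  by_cases hfg : f = g
  · subst hfg
    simp only [if_pos rfl]
    rw [Finset.prod_eq_one]
    · ring
    · intro i _
      by_cases hi : ∀ k, e k ≠ i <;> simp [hi]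
  · rw [if_neg hfg]
    by_cases hcomp : f ∘ e = g ∘ e
    · rw [if_pos hcomp]
      have : ∃ i, (∀ k, e k ≠ i) ∧ f i ≠ g i := by
        obtain ⟨i, hi⟩ := Function.ne_iff.mp hfg
        refine ⟨i, ?_, hi⟩
        intro k hk
        subst hk
        exact hi (congrFun hcomp k)
      obtain ⟨i, hi1, hi2⟩ := this
      rw [Finset.prod_eq_zero (Finset.mem_univ i)]
      · ring
      · simp [hi1, hi2]
    · rw [if_neg hcomp, zero_mul]

lemma opBlock_op2 {N m n : ℕ} (ι : Fin n → Fin m) (hι : Function.Injective ι) (X : End2 N)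
    (p q : Fin n) :
    opBlock N ι (op2 N n X p q) = op2 N m X (ι p) (ι q) := by
  classical
  ext f g
  unfold opBlock op2
  simp only [Function.comp_apply]
  rw [mul_assoc]
  congr 1
  have hsplit : ∀ (F : Fin m → ℂ), (∏ i : Fin m, F i) =
      (∏ j : Fin n, F (ι j)) * ∏ i ∈ (Finset.univ.image ι)ᶜ, F i := by
    intro F
    rw [← Finset.prod_image (fun a _ b _ h => hι h), Finset.prod_mul_prod_compl]
  rw [hsplit (fun i => if i ≠ ι p ∧ i ≠ ι q then (if f i = g i then (1:ℂ) else 0) else 1),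
      hsplit (fun i => if ∀ k, ι k ≠ i then (if f i = g i then (1:ℂ) else 0) else 1)]
  have e1 : (∏ j : Fin n, if ι j ≠ ι p ∧ ι j ≠ ι q then (if f (ι j) = g (ι j) then (1:ℂ) else 0) else 1)
      = ∏ j : Fin n, if j ≠ p ∧ j ≠ q then (if f (ι j) = g (ι j) then (1:ℂ) else 0) else 1 := by
    apply Finset.prod_congr rfl
    intro j _
    congr 1
    simp [hι.ne_iff]
  have e2 : (∏ j : Fin n, if ∀ k, ι k ≠ ι j then (if f (ι j) = g (ι j) then (1:ℂ) else 0) else 1) = 1 := by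
    apply Finset.prod_eq_one
    intro j _
    rw [if_neg]
    push_neg
    exact ⟨j, rfl⟩
  have e3 : (∏ i ∈ (Finset.univ.image ι)ᶜ, if i ≠ ι p ∧ i ≠ ι q then (if f i = g i then (1:ℂ) else 0) else 1)
      = ∏ i ∈ (Finset.univ.image ι)ᶜ, if ∀ k, ι k ≠ i then (if f i = g i then (1:ℂ) else 0) else 1 := by
    apply Finset.prod_congr rfl
    intro i hi
    rw [Finset.mem_compl, Finset.mem_image] at hi
    push_neg at hi
    have h1 : ∀ k, ι k ≠ i := fun k => hi k (Finset.mem_univ k)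
    rw [if_pos ⟨Ne.symm (h1 p), Ne.symm (h1 q)⟩, if_pos h1]
  rw [e1, e2, e3, one_mul]


section Abstract
variable {M : Type*} [Monoid M] {α : Type*} {β : Type*}

/-- pairs (i,j) with i before j in the list, lexicographic. -/
def pairsOf : List α → List (α × α)
  | [] => []
  | x :: xs => (xs.map fun y => (x, y)) ++ pairsOf xs

lemma mem_pairsOf : ∀ (L : List α) (p : α × α), p ∈ pairsOf L → p.1 ∈ L ∧ p.2 ∈ L
  | [], p, h => by simp [pairsOf] at h
  | x :: xs, p, h => by
    simp only [pairsOf, List.mem_append, List.mem_map] at h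
    rcases h with ⟨y, hy, rfl⟩ | h
    · exact ⟨by simp, by simp [hy]⟩
    · obtain ⟨h1, h2⟩ := mem_pairsOf xs p h
      exact ⟨List.mem_cons_of_mem _ h1, List.mem_cons_of_mem _ h2⟩

lemma commute_list_prod (y : M) (l : List M) (h : ∀ x ∈ l, Commute y x) :
    y * l.prod = l.prod * y :=
  (Commute.list_prod_right l y h).eq

lemma hc_aux {x y : M} (z : M) (h : Commute x y) : x * (y * z) = y * (x * z) := by
  rw [← mul_assoc, h.eq, mul_assoc]

lemma prod_interchange : ∀ (l : List α) (f g : α → M), l.Nodup →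
    (∀ x ∈ l, ∀ y ∈ l, x ≠ y → Commute (f x) (g y)) →
    (l.map f).prod * (l.map g).prod = (l.map fun x => f x * g x).prod
  | [], f, g, _, _ => by simp
  | a :: l, f, g, hnd, hc => by
    simp only [List.map_cons, List.prod_cons]
    have hnd' := (List.nodup_cons.mp hnd)
    have hcomm : g a * (l.map f).prod = (l.map f).prod * g a := by
      refine (commute_list_prod _ _ ?_)
      intro x hx
      obtain ⟨y, hy, rfl⟩ := List.mem_map.mp hx
      exact (hc y (List.mem_cons_of_mem _ hy) a (List.mem_cons_self)
        (fun h => hnd'.1 (h ▸ hy))).symm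
    calc f a * (l.map f).prod * (g a * (l.map g).prod)
        = f a * ((l.map f).prod * g a) * (l.map g).prod := by
          simp only [mul_assoc]
      _ = f a * (g a * (l.map f).prod) * (l.map g).prod := by rw [hcomm]
      _ = (f a * g a) * ((l.map f).prod * (l.map g).prod) := by simp only [mul_assoc]
      _ = (f a * g a) * (l.map fun x => f x * g x).prod := by
          rw [prod_interchange l f g hnd'.2
            (fun x hx y hy hxy => hc x (List.mem_cons_of_mem _ hx) y (List.mem_cons_of_mem _ hy) hxy)]

lemma grid_exchange (A : α → β → M) : ∀ (is : List β) (ks : List α), is.Nodup → ks.Nodup →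
    (∀ k ∈ ks, ∀ l ∈ ks, ∀ i ∈ is, ∀ j ∈ is, k ≠ l → i ≠ j → Commute (A k i) (A l j)) →
    (is.map fun i => (ks.map fun k => A k i).prod).prod
      = (ks.map fun k => (is.map fun i => A k i).prod).prod
  | [], ks, _, _, _ => by
    simp only [List.map_nil, List.prod_nil, List.map_nil]
    induction ks with
    | nil => simp
    | cons a l ih => simp_all
  | i :: is, ks, hndi, hndk, hc => by
    simp only [List.map_cons, List.prod_cons]
    have hndi' := List.nodup_cons.mp hndi
    rw [grid_exchange A is ks hndi'.2 hndk
      (fun k hk l hl i' hi' j hj h1 h2 => hc k hk l hl i' (List.mem_cons_of_mem _ hi') j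
        (List.mem_cons_of_mem _ hj) h1 h2)]
    rw [prod_interchange ks (fun k => A k i) (fun k => (is.map fun j => A k j).prod) hndk ?_]
    · intro x hx y hy hxy
      refine Commute.list_prod_right _ _ ?_
      intro z hz
      obtain ⟨j, hj, rfl⟩ := List.mem_map.mp hz
      exact hc x hx y hy i (List.mem_cons_self) j (List.mem_cons_of_mem _ hj) hxy
        (fun h => hndi'.1 (h ▸ hj))

section Col
variable (A : α → M) (F : α → α → M)
variable (h1 : ∀ a b, a ≠ b → F a b * A a * A b = A b * A a * F a b)
variable (h2 : ∀ a b k, k ≠ a → k ≠ b → Commute (F a b) (A k))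

include h1 h2 in
lemma push_col : ∀ (L : List α) (a : α), a ∉ L → L.Nodup → ∀ x : M,
    (L.reverse.map A).prod * (A a * ((L.map (F a)).prod * x))
      = (L.map (F a)).prod * (A a * ((L.reverse.map A).prod * x))
  | [], a, _, _, x => by simp
  | b :: L, a, hmem, hnd, x => by
    have hab : a ≠ b := fun h => hmem (h ▸ List.mem_cons_self)
    have haL : a ∉ L := fun h => hmem (List.mem_cons_of_mem _ h)
    have hnd' := List.nodup_cons.mp hnd
    simp only [List.reverse_cons, List.map_append, List.map_cons, List.prod_append,
      List.prod_cons, List.map_nil, List.prod_nil, mul_one, mul_assoc]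
    set cd := (L.reverse.map A).prod with hcd
    set pf := (L.map (F a)).prod with hpf
    have H1 : ∀ y : M, A b * (A a * (F a b * y)) = F a b * (A a * (A b * y)) := by
      intro y
      rw [← mul_assoc, ← mul_assoc, ← h1 a b hab, mul_assoc, mul_assoc]
    have HcdF : Commute (F a b) cd := by
      rw [hcd]
      refine Commute.list_prod_right _ _ ?_
      intro z hz
      obtain ⟨k, hk, rfl⟩ := List.mem_map.mp hz
      have hk' := List.mem_reverse.mp hk
      exact h2 a b k (fun h => haL (h ▸ hk')) (fun h => hnd'.1 (h ▸ hk'))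
    have HAbpf : Commute (A b) pf := by
      rw [hpf]
      refine Commute.list_prod_right _ _ ?_
      intro z hz
      obtain ⟨k, hk, rfl⟩ := List.mem_map.mp hz
      exact (h2 a k b hab.symm (fun h => hnd'.1 (h ▸ hk))).symm
    calc cd * (A b * (A a * (F a b * (pf * x))))
        = cd * (F a b * (A a * (A b * (pf * x)))) := by rw [H1]
      _ = F a b * (cd * (A a * (A b * (pf * x)))) := by rw [hc_aux _ HcdF.symm]
      _ = F a b * (cd * (A a * (pf * (A b * x)))) := by rw [hc_aux _ HAbpf]
      _ = F a b * (pf * (A a * (cd * (A b * x)))) := by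
          rw [push_col L a haL hnd'.2 (A b * x)]

include h1 h2 in
lemma col_through : ∀ (L : List α), L.Nodup → ∀ x : M,
    (L.reverse.map A).prod * (((pairsOf L).map fun p => F p.1 p.2).prod * x)
      = ((pairsOf L).map fun p => F p.1 p.2).prod * ((L.map A).prod * x)
  | [], _, x => by simp [pairsOf]
  | a :: L, hnd, x => by
    have hnd' := List.nodup_cons.mp hnd
    simp only [pairsOf, List.reverse_cons, List.map_append, List.map_cons, List.prod_append,
      List.prod_cons, List.map_nil, List.prod_nil, mul_one, List.map_map, mul_assoc]
    have hmapmap : (L.map ((fun p : α × α => F p.1 p.2) ∘ fun y => (a, y))) = L.map (F a) := by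
      simp [Function.comp]
    rw [hmapmap]
    set cd := (L.reverse.map A).prod
    set pf := (L.map (F a)).prod
    set FFp := ((pairsOf L).map fun p => F p.1 p.2).prod with hFF
    have HaFF : Commute (A a) FFp := by
      rw [hFF]
      refine Commute.list_prod_right _ _ ?_
      intro z hz
      obtain ⟨p, hp, rfl⟩ := List.mem_map.mp hz
      obtain ⟨hp1, hp2⟩ := mem_pairsOf L p hp
      exact (h2 p.1 p.2 a (fun h => hnd'.1 (h ▸ hp1)) (fun h => hnd'.1 (h ▸ hp2))).symm
    calc cd * (A a * (pf * (FFp * x)))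
        = pf * (A a * (cd * (FFp * x))) := by
          rw [push_col A F h1 h2 L a hnd'.1 hnd'.2 (FFp * x)]
      _ = pf * (A a * (FFp * ((L.map A).prod * x))) := by
          rw [col_through L hnd'.2 x]
      _ = pf * (FFp * (A a * ((L.map A).prod * x))) := by rw [hc_aux _ HaFF]

end Col

section Row
variable (A : α → M) (G : α → α → M)
variable (h1 : ∀ a b, a ≠ b → A a * A b * G a b = G a b * A b * A a)
variable (h2 : ∀ a b k, k ≠ a → k ≠ b → Commute (G a b) (A k))

include h1 h2 in
lemma push_row : ∀ (L : List α) (a : α), a ∉ L → L.Nodup → ∀ x : M,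
    A a * ((L.map A).prod * ((L.map (G a)).prod * x))
      = (L.map (G a)).prod * ((L.map A).prod * (A a * x))
  | [], a, _, _, x => by simp
  | b :: L, a, hmem, hnd, x => by
    have hab : a ≠ b := fun h => hmem (h ▸ List.mem_cons_self)
    have haL : a ∉ L := fun h => hmem (List.mem_cons_of_mem _ h)
    have hnd' := List.nodup_cons.mp hnd
    simp only [List.map_cons, List.prod_cons, mul_assoc]
    set ra := (L.map A).prod with hra
    set pg := (L.map (G a)).prod with hpg
    have H1 : ∀ y : M, A a * (A b * (G a b * y)) = G a b * (A b * (A a * y)) := by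
      intro y
      rw [← mul_assoc, ← mul_assoc, h1 a b hab, mul_assoc, mul_assoc]
    have HraG : Commute (G a b) ra := by
      rw [hra]
      refine Commute.list_prod_right _ _ ?_
      intro z hz
      obtain ⟨k, hk, rfl⟩ := List.mem_map.mp hz
      exact h2 a b k (fun h => haL (h ▸ hk)) (fun h => hnd'.1 (h ▸ hk))
    have HAbpg : Commute (A b) pg := by
      rw [hpg]
      refine Commute.list_prod_right _ _ ?_
      intro z hz
      obtain ⟨k, hk, rfl⟩ := List.mem_map.mp hz
      exact (h2 a k b hab.symm (fun h => hnd'.1 (h ▸ hk))).symm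
    calc A a * (A b * (ra * (G a b * (pg * x))))
        = A a * (A b * (G a b * (ra * (pg * x)))) := by rw [hc_aux _ HraG.symm]
      _ = G a b * (A b * (A a * (ra * (pg * x)))) := by rw [H1]
      _ = G a b * (A b * (pg * (ra * (A a * x)))) := by
          rw [push_row L a haL hnd'.2 x]
      _ = G a b * (pg * (A b * (ra * (A a * x)))) := by rw [hc_aux _ HAbpg.symm]

include h1 h2 in
lemma row_through : ∀ (L : List α), L.Nodup → ∀ x : M,
    (L.map A).prod * (((pairsOf L).map fun p => G p.1 p.2).prod * x)
      = ((pairsOf L).map fun p => G p.1 p.2).prod * ((L.reverse.map A).prod * x)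
  | [], _, x => by simp [pairsOf]
  | a :: L, hnd, x => by
    have hnd' := List.nodup_cons.mp hnd
    simp only [pairsOf, List.reverse_cons, List.map_append, List.map_cons, List.prod_append,
      List.prod_cons, List.map_nil, List.prod_nil, mul_one, List.map_map, mul_assoc]
    have hmapmap : (L.map ((fun p : α × α => G p.1 p.2) ∘ fun y => (a, y))) = L.map (G a) := by
      simp [Function.comp]
    rw [hmapmap]
    set ra := (L.map A).prod
    set rd := (L.reverse.map A).prod
    set pg := (L.map (G a)).prod
    set GGp := ((pairsOf L).map fun p => G p.1 p.2).prod with hGG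
    have HaGG : Commute (A a) GGp := by
      rw [hGG]
      refine Commute.list_prod_right _ _ ?_
      intro z hz
      obtain ⟨p, hp, rfl⟩ := List.mem_map.mp hz
      obtain ⟨hp1, hp2⟩ := mem_pairsOf L p hp
      exact (h2 p.1 p.2 a (fun h => hnd'.1 (h ▸ hp1)) (fun h => hnd'.1 (h ▸ hp2))).symm
    calc A a * (ra * (pg * (GGp * x)))
        = pg * (ra * (A a * (GGp * x))) := by
          rw [push_row A G h1 h2 L a hnd'.1 hnd'.2 (GGp * x)]
      _ = pg * (ra * (GGp * (A a * x))) := by rw [hc_aux _ HaGG]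
      _ = pg * (GGp * (rd * (A a * x))) := by rw [row_through L hnd'.2 (A a * x)]

end Row
end Abstract

lemma flatMap_congr'' {α β : Type*} : ∀ (l : List α) (f g : α → List β),
    (∀ a ∈ l, f a = g a) → l.flatMap f = l.flatMap g
  | [], _, _, _ => rfl
  | a :: l, f, g, h => by
    simp only [List.flatMap_cons]
    rw [h a (List.mem_cons_self),
      flatMap_congr'' l f g (fun x hx => h x (List.mem_cons_of_mem _ hx))]

lemma lex_aux {n : ℕ} : ∀ (L : List (Fin n)), L.Pairwise (· < ·) →
    (L.flatMap fun i => (L.filter fun j => decide (i < j)).map fun j => (i, j)) = pairsOf L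
  | [], _ => rfl
  | x :: xs, hp => by
    obtain ⟨hhead, htail⟩ := List.pairwise_cons.mp hp
    simp only [List.flatMap_cons, pairsOf]
    congr 1
    · have h1 : (x :: xs).filter (fun j => decide (x < j)) = xs := by
        rw [List.filter_cons]
        simp only [decide_eq_true_eq, lt_irrefl, if_false]
        exact List.filter_eq_self.mpr (fun a ha => by simpa using hhead a ha)
      rw [h1]
    · rw [flatMap_congr'' xs _
          (fun i => (xs.filter fun j => decide (i < j)).map fun j => (i, j)) ?_,
          lex_aux xs htail]
      intro i hi
      have : (x :: xs).filter (fun j => decide (i < j)) = xs.filter (fun j => decide (i < j)) := by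
        rw [List.filter_cons]
        simp [not_lt.mpr (le_of_lt (hhead i hi))]
      rw [this]

lemma lexPairs_eq_pairsOf (n : ℕ) : lexPairs n = pairsOf (List.finRange n) :=
  lex_aux _ (List.pairwise_lt_finRange n)

lemma prods_through {M : Type*} [Monoid M] {β : Type*} (cd ca : β → M) (FF : M)
    (h : ∀ i (x : M), cd i * (FF * x) = FF * (ca i * x)) :
    ∀ (is : List β) (x : M), (is.map cd).prod * (FF * x) = FF * ((is.map ca).prod * x)
  | [], x => by simp
  | i :: is, x => by
    simp only [List.map_cons, List.prod_cons, mul_assoc]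
    rw [prods_through cd ca FF h is x, h i _]

lemma opBlock_listProd {N m n : ℕ} {γ : Type*} (e : Fin n → Fin m) (he : Function.Injective e) :
    ∀ (l : List γ) (f : γ → EndT N n),
      opBlock N e ((l.map f).prod) = (l.map fun z => opBlock N e (f z)).prod
  | [], f => by simpa using opBlock_one e
  | a :: l, f => by
    simp only [List.map_cons, List.prod_cons]
    rw [opBlock_mul e he, opBlock_listProd e he l f]

lemma ybe_lift {N m : ℕ} {R : ℂ → End2 N} (hR : YangBaxter N R) (a b e : Fin m)
    (hab : a ≠ b) (hae : a ≠ e) (hbe : b ≠ e) (u v : ℂ) :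
    op2 N m (R u) a b * op2 N m (R (u + v)) a e * op2 N m (R v) b e
      = op2 N m (R v) b e * op2 N m (R (u + v)) a e * op2 N m (R u) a b := by
  set ι : Fin 3 → Fin m := ![a, b, e] with hι
  have hinj : Function.Injective ι := by
    intro x y hxy
    fin_cases x <;> fin_cases y <;> simp_all [hι] <;> tauto
  have h3 := congrArg (opBlock N ι) (hR u v)
  rw [opBlock_mul ι hinj, opBlock_mul ι hinj, opBlock_mul ι hinj, opBlock_mul ι hinj] at h3
  simp only [opBlock_op2 ι hinj] at h3
  simpa [hι] using h3

lemma fin_natAdd_inj {n n' : ℕ} : Function.Injective (Fin.natAdd n : Fin n' → Fin (n + n')) := by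
  intro x y h
  have := congrArg Fin.val h
  simp [Fin.coe_natAdd] at this
  exact Fin.ext this

lemma fin_castAdd_ne_natAdd {n n' : ℕ} (k : Fin n) (i : Fin n') :
    Fin.castAdd n' k ≠ Fin.natAdd n i := by
  intro h
  have hk := k.isLt
  have := congrArg Fin.val h
  simp [Fin.coe_castAdd, Fin.coe_natAdd] at this
  omega

noncomputable def AAop (N : ℕ) (R : ℂ → End2 N) {n n' : ℕ} (c : Fin n → ℂ) (c' : Fin n' → ℂ)
    (u : ℂ) (k : Fin n) (i : Fin n') : EndT N (n + n') :=
  op2 N (n + n') (R (u + c k - c' i)) (Fin.castAdd n' k) (Fin.natAdd n i)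

noncomputable def Fabop (N : ℕ) (R : ℂ → End2 N) {n : ℕ} (n' : ℕ) (c : Fin n → ℂ)
    (a b : Fin n) : EndT N (n + n') :=
  op2 N (n + n') (R (c a - c b)) (Fin.castAdd n' a) (Fin.castAdd n' b)

noncomputable def Gabop (N : ℕ) (R : ℂ → End2 N) (n : ℕ) {n' : ℕ} (c' : Fin n' → ℂ)
    (a b : Fin n') : EndT N (n + n') :=
  op2 N (n + n') (R (c' a - c' b)) (Fin.natAdd n a) (Fin.natAdd n b)

theorem key_intertwine (N : ℕ) (R : ℂ → End2 N) (hR : YangBaxter N R)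
    (n n' : ℕ) (c : Fin n → ℂ) (c' : Fin n' → ℂ) (u : ℂ) :
    ∃ S : EndT N (n + n'),
      fusedOp N R (Fin.castAdd n') (Fin.natAdd n) c c' u *
        (opBlock N (Fin.castAdd n') (Fop N R c) * opBlock N (Fin.natAdd n) (Fop N R c')) =
      (opBlock N (Fin.castAdd n') (Fop N R c) * opBlock N (Fin.natAdd n) (Fop N R c')) * S := by
  classical
  have hcainj : Function.Injective (Fin.castAdd n' : Fin n → Fin (n + n')) :=
    Fin.castAdd_injective n n'
  have hnainj : Function.Injective (Fin.natAdd n : Fin n' → Fin (n + n')) := fin_natAdd_inj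
  -- representations of the two F blocks as products over pairs
  have hFA : opBlock N (Fin.castAdd n') (Fop N R c)
      = ((pairsOf (List.finRange n)).map fun p => Fabop N R n' c p.1 p.2).prod := by
    rw [show Fop N R c = ((lexPairs n).map fun p => op2 N n (R (c p.1 - c p.2)) p.1 p.2).prod
      from by simp only [Fop]]
    rw [opBlock_listProd _ hcainj, lexPairs_eq_pairsOf]
    have : (fun p : Fin n × Fin n =>
        opBlock N (Fin.castAdd n') (op2 N n (R (c p.1 - c p.2)) p.1 p.2))
        = fun p => Fabop N R n' c p.1 p.2 :=
      funext fun p => opBlock_op2 _ hcainj _ p.1 p.2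
    rw [this]
  have hFB : opBlock N (Fin.natAdd n) (Fop N R c')
      = ((pairsOf (List.finRange n')).map fun p => Gabop N R n c' p.1 p.2).prod := by
    rw [show Fop N R c' = ((lexPairs n').map fun p => op2 N n' (R (c' p.1 - c' p.2)) p.1 p.2).prod
      from by simp only [Fop]]
    rw [opBlock_listProd _ hnainj, lexPairs_eq_pairsOf]
    have : (fun p : Fin n' × Fin n' =>
        opBlock N (Fin.natAdd n) (op2 N n' (R (c' p.1 - c' p.2)) p.1 p.2))
        = fun p => Gabop N R n c' p.1 p.2 :=
      funext fun p => opBlock_op2 _ hnainj _ p.1 p.2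
    rw [this]
  -- step 1 : push F(c) through the fused operator, column by column
  have step1 : fusedOp N R (Fin.castAdd n') (Fin.natAdd n) c c' u *
        opBlock N (Fin.castAdd n') (Fop N R c)
      = opBlock N (Fin.castAdd n') (Fop N R c) *
        ((List.finRange n').map fun i =>
          ((List.finRange n).map fun k => AAop N R c c' u k i).prod).prod := by
    rw [hFA]
    have hcol : ∀ (i : Fin n') (x : EndT N (n + n')),
        (((List.finRange n).reverse).map fun k => AAop N R c c' u k i).prod *
          (((pairsOf (List.finRange n)).map fun p => Fabop N R n' c p.1 p.2).prod * x)
        = ((pairsOf (List.finRange n)).map fun p => Fabop N R n' c p.1 p.2).prod *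
          (((List.finRange n).map fun k => AAop N R c c' u k i).prod * x) := by
      intro i x
      refine col_through (fun k => AAop N R c c' u k i) (Fabop N R n' c) ?_ ?_
        (List.finRange n) (List.nodup_finRange n) x
      · intro a b hab
        have h := ybe_lift hR (Fin.castAdd n' a) (Fin.castAdd n' b) (Fin.natAdd n i)
          (hcainj.ne hab) (fin_castAdd_ne_natAdd a i) (fin_castAdd_ne_natAdd b i)
          (c a - c b) (u + c b - c' i)
        have harg : (c a - c b) + (u + c b - c' i) = u + c a - c' i := by ring
        rw [harg] at h
        exact h
      · intro a b k hka hkb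
        exact op2_comm_disjoint _ _ _ _ _ _
          (hcainj.ne (Ne.symm hka)) (fin_castAdd_ne_natAdd a i)
          (hcainj.ne (Ne.symm hkb)) (fin_castAdd_ne_natAdd b i)
    have h := prods_through _ _ _ hcol (List.finRange n') 1
    simp only [mul_one] at h
    rw [show fusedOp N R (Fin.castAdd n') (Fin.natAdd n) c c' u
        = ((List.finRange n').map fun i =>
            (((List.finRange n).reverse).map fun k => AAop N R c c' u k i).prod).prod
      from by simp only [fusedOp, AAop]]
    exact h
  -- step 2 : reorder column-major into row-major
  have step2 : ((List.finRange n').map fun i =>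
        ((List.finRange n).map fun k => AAop N R c c' u k i).prod).prod
      = ((List.finRange n).map fun k =>
        ((List.finRange n').map fun i => AAop N R c c' u k i).prod).prod := by
    refine grid_exchange (AAop N R c c' u) (List.finRange n') (List.finRange n)
      (List.nodup_finRange n') (List.nodup_finRange n) ?_
    intro k _ l _ i _ j _ hkl hij
    exact op2_comm_disjoint _ _ _ _ _ _
      (hcainj.ne hkl) (fin_castAdd_ne_natAdd k j)
      ((fin_castAdd_ne_natAdd l i).symm) (hnainj.ne hij)
  -- step 3 : push F(c') through, row by row
  have step3 : ((List.finRange n).map fun k =>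
        ((List.finRange n').map fun i => AAop N R c c' u k i).prod).prod *
        opBlock N (Fin.natAdd n) (Fop N R c')
      = opBlock N (Fin.natAdd n) (Fop N R c') *
        ((List.finRange n).map fun k =>
          (((List.finRange n').reverse).map fun i => AAop N R c c' u k i).prod).prod := by
    rw [hFB]
    have hrow : ∀ (k : Fin n) (x : EndT N (n + n')),
        ((List.finRange n').map fun i => AAop N R c c' u k i).prod *
          (((pairsOf (List.finRange n')).map fun p => Gabop N R n c' p.1 p.2).prod * x)
        = ((pairsOf (List.finRange n')).map fun p => Gabop N R n c' p.1 p.2).prod *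
          ((((List.finRange n').reverse).map fun i => AAop N R c c' u k i).prod * x) := by
      intro k x
      refine row_through (fun i => AAop N R c c' u k i) (Gabop N R n c') ?_ ?_
        (List.finRange n') (List.nodup_finRange n') x
      · intro a b hab
        have h := ybe_lift hR (Fin.castAdd n' k) (Fin.natAdd n a) (Fin.natAdd n b)
          (fin_castAdd_ne_natAdd k a) (fin_castAdd_ne_natAdd k b) (hnainj.ne hab)
          (u + c k - c' a) (c' a - c' b)
        have harg : (u + c k - c' a) + (c' a - c' b) = u + c k - c' b := by ring
        rw [harg] at h
        exact h
      · intro a b i hia hib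
        exact op2_comm_disjoint _ _ _ _ _ _
          ((fin_castAdd_ne_natAdd k a).symm) (hnainj.ne (Ne.symm hia))
          ((fin_castAdd_ne_natAdd k b).symm) (hnainj.ne (Ne.symm hib))
    have h := prods_through _ _ _ hrow (List.finRange n) 1
    simp only [mul_one] at h
    exact h
  refine ⟨((List.finRange n).map fun k =>
      (((List.finRange n').reverse).map fun i => AAop N R c c' u k i).prod).prod, ?_⟩
  calc fusedOp N R (Fin.castAdd n') (Fin.natAdd n) c c' u *
        (opBlock N (Fin.castAdd n') (Fop N R c) * opBlock N (Fin.natAdd n) (Fop N R c'))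
      = (fusedOp N R (Fin.castAdd n') (Fin.natAdd n) c c' u *
          opBlock N (Fin.castAdd n') (Fop N R c)) * opBlock N (Fin.natAdd n) (Fop N R c') := by
        rw [mul_assoc]
    _ = (opBlock N (Fin.castAdd n') (Fop N R c) *
          ((List.finRange n').map fun i =>
            ((List.finRange n).map fun k => AAop N R c c' u k i).prod).prod) *
          opBlock N (Fin.natAdd n) (Fop N R c') := by rw [step1]
    _ = opBlock N (Fin.castAdd n') (Fop N R c) *
          (((List.finRange n).map fun k =>
            ((List.finRange n').map fun i => AAop N R c c' u k i).prod).prod *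
            opBlock N (Fin.natAdd n) (Fop N R c')) := by rw [step2, mul_assoc]
    _ = opBlock N (Fin.castAdd n') (Fop N R c) *
          (opBlock N (Fin.natAdd n) (Fop N R c') *
            ((List.finRange n).map fun k =>
              (((List.finRange n').reverse).map fun i => AAop N R c c' u k i).prod).prod) := by
        rw [step3]
    _ = (opBlock N (Fin.castAdd n') (Fop N R c) * opBlock N (Fin.natAdd n) (Fop N R c')) *
          ((List.finRange n).map fun k =>
            (((List.finRange n').reverse).map fun i => AAop N R c c' u k i).prod).prod := by
        rw [mul_assoc]

end Aux

/-- The fused operator `R_{c,c'}(u)` maps the subspace `W_c ⊗ W_{c'}`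
of `V^{⊗n} ⊗ V^{⊗n'}` (the image of `F(c) ⊗ F(c')`) into itself. -/
theorem fused_preserves_subspace
    (N : ℕ) (R : ℂ → End2 N) (hR : YangBaxter N R)
    (n n' : ℕ) (hn : 2 ≤ n) (hn' : 2 ≤ n')
    (c : Fin n → ℂ) (c' : Fin n' → ℂ) (u : ℂ) :
    ∀ x ∈ LinearMap.range (Matrix.mulVecLin
        (opBlock N (Fin.castAdd n') (Fop N R c) * opBlock N (Fin.natAdd n) (Fop N R c'))),
      Matrix.mulVec (fusedOp N R (Fin.castAdd n') (Fin.natAdd n) c c' u) x ∈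
      LinearMap.range (Matrix.mulVecLin
        (opBlock N (Fin.castAdd n') (Fop N R c) * opBlock N (Fin.natAdd n) (Fop N R c'))) := by
  obtain ⟨S, hS⟩ := key_intertwine N R hR n n' c c' u
  intro x hx
  obtain ⟨y, rfl⟩ := hx
  refine ⟨S.mulVec y, ?_⟩
  rw [Matrix.mulVecLin_apply, Matrix.mulVecLin_apply, Matrix.mulVec_mulVec,
    Matrix.mulVec_mulVec, ← hS]
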